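/- Let τ > 0 and i ≥ 0 be an integer. Then Σ_{n≥0} e^{-τπ²n²} (πn)^{2i} ≤ C (1 + 1/√τ) · i!/τ^i for a universal constant C > 0. -/

import Mathlib

open Real

lemma summable_gauss {b : ℝ} (hb : 0 < b) :
    Summable (fun n : ℕ => Real.exp (-b * (n : ℝ) ^ 2)) := by
  apply Summable.of_nonneg_of_le (fun n => (Real.exp_pos _).le)
    (fun n => ?_) (summable_geometric_of_lt_one (Real.exp_pos (-b)).le
      (Real.exp_lt_one_iff.2 (by linarith)))
  rw [← Real.exp_nat_mul]
  apply Real.exp_le_exp.2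
  have h : (n : ℝ) ≤ (n : ℝ) ^ 2 := by
    have := Nat.le_self_pow (two_ne_zero) n
    exact_mod_cast this
  nlinarith

lemma geo_tail_bound {b : ℝ} (hb : 0 < b) :
    (∑' n : ℕ, Real.exp (-b * (n : ℝ) ^ 2)) ≤ 2 + 2 / Real.sqrt b := by
  set s := Real.sqrt b with hs
  have hs0 : 0 < s := Real.sqrt_pos.2 hb
  have hss : s * s = b := Real.mul_self_sqrt hb.le
  set N : ℕ := ⌈1 / s⌉₊ with hN
  have hNge : 1 / s ≤ (N : ℝ) := Nat.le_ceil _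
  have hNlt : (N : ℝ) < 1 / s + 1 := Nat.ceil_lt_add_one (by positivity)
  have hsum := summable_gauss hb
  rw [← Summable.sum_add_tsum_nat_add (N + 1) hsum]
  have h1 : ∑ n ∈ Finset.range (N + 1), Real.exp (-b * (n : ℝ) ^ 2) ≤ (N : ℝ) + 1 := by
    calc ∑ n ∈ Finset.range (N + 1), Real.exp (-b * (n : ℝ) ^ 2)
        ≤ ∑ _n ∈ Finset.range (N + 1), 1 := by
          apply Finset.sum_le_sum
          intro n _
          rw [Real.exp_le_one_iff]
          nlinarith [sq_nonneg (n : ℝ)]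
      _ = (N : ℝ) + 1 := by simp
  have hr1 : Real.exp (-s) < 1 := Real.exp_lt_one_iff.2 (by linarith)
  have hr0 : (0 : ℝ) ≤ Real.exp (-s) := (Real.exp_pos _).le
  have h2 : (∑' k : ℕ, Real.exp (-b * ((k + (N + 1) : ℕ) : ℝ) ^ 2)) ≤ 1 / s := by
    have key : ∀ k : ℕ, Real.exp (-b * ((k + (N + 1) : ℕ) : ℝ) ^ 2) ≤ Real.exp (-s) ^ (k + 1) := by
      intro k
      rw [← Real.exp_nat_mul]
      apply Real.exp_le_exp.2
      push_cast
      have h1' : 1 ≤ s * ((k : ℝ) + N + 1) := by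
        have : 1 / s ≤ (k : ℝ) + N + 1 := by
          have : (0:ℝ) ≤ (k:ℝ) := Nat.cast_nonneg k
          linarith
        calc (1:ℝ) = s * (1/s) := by field_simp
          _ ≤ s * ((k : ℝ) + N + 1) := by
            apply mul_le_mul_of_nonneg_left this hs0.le
      have hk0 : (0:ℝ) ≤ (k:ℝ) := Nat.cast_nonneg k
      have hN0 : (0:ℝ) ≤ (N:ℝ) := Nat.cast_nonneg N
      nlinarith [mul_le_mul_of_nonneg_left h1' (mul_pos hs0 (by linarith : (0:ℝ) < (k:ℝ)+N+1)).le]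
    have hsumgeo : Summable (fun k : ℕ => Real.exp (-s) ^ (k + 1)) := by
      apply Summable.comp_injective (summable_geometric_of_lt_one hr0 hr1)
        (add_left_injective 1)
    calc (∑' k : ℕ, Real.exp (-b * ((k + (N + 1) : ℕ) : ℝ) ^ 2))
        ≤ ∑' k : ℕ, Real.exp (-s) ^ (k + 1) := by
          apply Summable.tsum_le_tsum key _ hsumgeo
          exact Summable.of_nonneg_of_le (fun n => (Real.exp_pos _).le) key hsumgeo
      _ = Real.exp (-s) * (1 - Real.exp (-s))⁻¹ := by
          simp only [pow_succ']
          rw [tsum_mul_left, tsum_geometric_of_lt_one hr0 hr1]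
      _ ≤ 1 / s := by
          rw [← div_eq_mul_inv, div_le_div_iff₀ (by linarith) hs0]
          have h := Real.add_one_le_exp s
          have hmul : Real.exp (-s) * Real.exp s = 1 := by
            rw [← Real.exp_add]; simp
          nlinarith [mul_nonneg hr0 (sub_nonneg.2 h)]
  have hd : 2 / s = 2 * (1 / s) := by ring
  linarith

lemma pow_mul_exp_neg_le (i : ℕ) {y : ℝ} (hy : 0 ≤ y) :
    y ^ i * Real.exp (-y) ≤ (i : ℝ) ^ i * Real.exp (-(i : ℝ)) := by
  rcases Nat.eq_zero_or_pos i with h0 | hi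
  · subst h0; simp [Real.exp_le_one_iff, hy]
  rcases eq_or_lt_of_le hy with h | hy'
  · rw [← h, zero_pow (by omega), zero_mul]
    positivity
  · have hi0 : (0 : ℝ) < (i : ℝ) := by exact_mod_cast hi
    have hlog : Real.log (y / i) ≤ y / i - 1 := Real.log_le_sub_one_of_pos (by positivity)
    rw [Real.log_div (ne_of_gt hy') (ne_of_gt hi0)] at hlog
    have hyi : y ^ i = Real.exp ((i : ℝ) * Real.log y) := by
      rw [Real.exp_nat_mul, Real.exp_log hy']
    have hii : (i : ℝ) ^ i = Real.exp ((i : ℝ) * Real.log i) := by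
      rw [Real.exp_nat_mul, Real.exp_log hi0]
    rw [hyi, hii, ← Real.exp_add, ← Real.exp_add]
    apply Real.exp_le_exp.2
    have h2 : (i : ℝ) * (y / i - 1) = y - i := by field_simp
    nlinarith [mul_le_mul_of_nonneg_left hlog hi0.le]

lemma factorial_lb (i : ℕ) (hi : 1 ≤ i) :
    Real.sqrt i * ((i : ℝ) ^ i * Real.exp (-(i : ℝ))) ≤ (Nat.factorial i : ℝ) := by
  have hi0 : (0 : ℝ) < (i : ℝ) := by exact_mod_cast hi
  have hstir : Real.sqrt π ≤ Stirling.stirlingSeq i := by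
    obtain ⟨k, rfl⟩ : ∃ k, i = k + 1 := ⟨i - 1, by omega⟩
    have hlim : Filter.Tendsto (Stirling.stirlingSeq ∘ Nat.succ) Filter.atTop (nhds (Real.sqrt π)) :=
      Stirling.tendsto_stirlingSeq_sqrt_pi.comp (Filter.tendsto_add_atTop_nat 1)
    exact Stirling.stirlingSeq'_antitone.le_of_tendsto hlim k
  have hpi1 : (1 : ℝ) ≤ Real.sqrt π := by
    rw [show (1:ℝ) = Real.sqrt 1 by simp]
    exact Real.sqrt_le_sqrt (by linarith [Real.pi_gt_three])
  have hfact : (Nat.factorial i : ℝ) =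
      Stirling.stirlingSeq i * (Real.sqrt (2 * i) * ((i : ℝ) / Real.exp 1) ^ i) := by
    rw [Stirling.stirlingSeq]
    have : Real.sqrt (2 * i) * ((i : ℝ) / Real.exp 1) ^ i ≠ 0 := by positivity
    field_simp
  have hde : ((i : ℝ) / Real.exp 1) ^ i = (i : ℝ) ^ i * Real.exp (-(i : ℝ)) := by
    rw [div_pow, Real.exp_neg, ← Real.exp_nat_mul, mul_one, div_eq_mul_inv]
  rw [hfact, hde]
  have hs2 : Real.sqrt i ≤ Real.sqrt (2 * i) := Real.sqrt_le_sqrt (by linarith)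
  have hP : (0:ℝ) ≤ (i : ℝ) ^ i * Real.exp (-(i : ℝ)) := by positivity
  have h1 : (1:ℝ) ≤ Stirling.stirlingSeq i := le_trans hpi1 hstir
  nlinarith [Real.sqrt_nonneg (i:ℝ), Real.sqrt_nonneg (2*(i:ℝ)),
    mul_le_mul_of_nonneg_right hs2 hP,
    mul_le_mul_of_nonneg_right (mul_le_mul_of_nonneg_right h1 (Real.sqrt_nonneg (2*(i:ℝ)))) hP]

lemma main_pointwise {a : ℝ} (ha : 0 < a) (i : ℕ) (hi : 1 ≤ i) (n : ℕ) :
    (a * (n : ℝ) ^ 2) ^ i * Real.exp (-(a * (n : ℝ) ^ 2)) ≤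
      Real.exp 1 * ((i : ℝ) ^ i * Real.exp (-(i : ℝ))) *
        Real.exp (-(a / (2 * i)) * (n : ℝ) ^ 2) := by
  have hi0 : (0 : ℝ) < (i : ℝ) := by exact_mod_cast hi
  have hi1 : (1 : ℝ) ≤ (i : ℝ) := by exact_mod_cast hi
  set y : ℝ := a * (n : ℝ) ^ 2 with hy
  have hy0 : 0 ≤ y := by positivity
  set c : ℝ := 1 - 1 / (2 * i) with hc
  have hc0 : 0 < c := by
    have : 1 / (2 * (i:ℝ)) ≤ 1 / 2 := by
      apply div_le_div_of_nonneg_left (by norm_num) (by norm_num) (by linarith)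
    simp only [hc]; linarith
  have hsplit : Real.exp (-y) = Real.exp (-(c * y)) * Real.exp (-(a / (2 * i)) * (n : ℝ) ^ 2) := by
    rw [← Real.exp_add]
    congr 1
    have h2i : (2 * (i:ℝ)) ≠ 0 := by positivity
    rw [hc, hy]
    field_simp
    ring
  rw [hsplit, ← mul_assoc]
  apply mul_le_mul_of_nonneg_right _ (Real.exp_pos _).le
  -- y^i * exp(-(c y)) ≤ e * (i^i e^{-i})
  have h1 : (c * y) ^ i * Real.exp (-(c * y)) ≤ (i : ℝ) ^ i * Real.exp (-(i : ℝ)) :=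
    pow_mul_exp_neg_le i (mul_nonneg hc0.le hy0)
  have h2 : y ^ i = (c * y) ^ i * (1 / c) ^ i := by
    rw [← mul_pow]
    congr 1
    field_simp
  have h3 : (1 / c) ^ i ≤ Real.exp 1 := by
    have hA : 1 / c ≤ Real.exp (1 / (i : ℝ)) := by
      have hE : 1 + 1 / (i:ℝ) ≤ Real.exp (1 / (i:ℝ)) := by
        have := Real.add_one_le_exp (1 / (i:ℝ))
        linarith
      rw [div_le_iff₀ hc0]
      have hinv : (0:ℝ) < 1 / (i:ℝ) := by positivity
      have key : (1 + 1/(i:ℝ)) * c ≥ 1 := by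
        rw [hc]
        have h2i : (0:ℝ) < 2 * (i:ℝ) := by linarith
        field_simp
        nlinarith
      nlinarith [Real.exp_pos (1/(i:ℝ))]
    calc (1 / c) ^ i ≤ Real.exp (1 / (i:ℝ)) ^ i := by
          apply pow_le_pow_left₀ (by positivity) hA
      _ = Real.exp 1 := by
          rw [← Real.exp_nat_mul]
          congr 1
          field_simp
  calc y ^ i * Real.exp (-(c * y)) = (c * y) ^ i * Real.exp (-(c * y)) * (1 / c) ^ i := by
        rw [h2]; ring
    _ ≤ ((i : ℝ) ^ i * Real.exp (-(i : ℝ))) * Real.exp 1 := by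
        apply mul_le_mul h1 h3 (by positivity) (by positivity)
    _ = Real.exp 1 * ((i : ℝ) ^ i * Real.exp (-(i : ℝ))) := by ring

theorem heat_sum_bound :
    ∃ C : ℝ, 0 < C ∧ ∀ (τ : ℝ), 0 < τ → ∀ i : ℕ,
      (∑' n : ℕ, Real.exp (-τ * π ^ 2 * (n : ℝ) ^ 2) * (π * (n : ℝ)) ^ (2 * i)) ≤
        C * (1 + 1 / Real.sqrt τ) * (Nat.factorial i : ℝ) / τ ^ i := by
  refine ⟨10, by norm_num, ?_⟩
  intro τ hτ i
  set a : ℝ := τ * π ^ 2 with ha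
  have ha0 : 0 < a := by positivity
  have hπ1 : (1:ℝ) ≤ π := by linarith [Real.pi_gt_three]
  have hτs : 0 < Real.sqrt τ := Real.sqrt_pos.2 hτ
  have hsa : Real.sqrt τ ≤ Real.sqrt a := by
    apply Real.sqrt_le_sqrt
    rw [ha]
    have hπ2 : (1:ℝ) ≤ π ^ 2 := by nlinarith
    nlinarith [mul_le_mul_of_nonneg_left hπ2 hτ.le]
  have hsa0 : 0 < Real.sqrt a := lt_of_lt_of_le hτs hsa
  rcases Nat.eq_zero_or_pos i with rfl | hi
  · -- i = 0
    simp only [mul_zero, pow_zero, mul_one, Nat.factorial_zero, Nat.cast_one]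
    have heq : ∀ n : ℕ, Real.exp (-τ * π ^ 2 * (n : ℝ) ^ 2) = Real.exp (-a * (n : ℝ) ^ 2) := by
      intro n; congr 1; rw [ha]; ring
    rw [tsum_congr heq]
    calc (∑' n : ℕ, Real.exp (-a * (n : ℝ) ^ 2)) ≤ 2 + 2 / Real.sqrt a := geo_tail_bound ha0
      _ ≤ 10 * (1 + 1 / Real.sqrt τ) / 1 := by
          have h3 : 2 / Real.sqrt a ≤ 2 / Real.sqrt τ := by
            apply div_le_div_of_nonneg_left (by norm_num) hτs hsa
          have h1 : 0 < 1 / Real.sqrt τ := by positivity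
          rw [div_one]
          have h2 : 2 / Real.sqrt τ = 2 * (1 / Real.sqrt τ) := by ring
          nlinarith
  · -- i ≥ 1
    have hi1 : (1:ℝ) ≤ (i:ℝ) := by exact_mod_cast hi
    have hi0 : (0:ℝ) < (i:ℝ) := by linarith
    set b : ℝ := a / (2 * i) with hb
    have hb0 : 0 < b := by positivity
    set F : ℝ := (i : ℝ) ^ i * Real.exp (-(i : ℝ)) with hF
    have hF0 : 0 ≤ F := by positivity
    set M : ℝ := Real.exp 1 * F / τ ^ i with hM
    have hM0 : 0 ≤ M := by positivity
    have hτi : (0:ℝ) < τ ^ i := by positivity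
    -- rewrite each term
    have heq : ∀ n : ℕ, Real.exp (-τ * π ^ 2 * (n : ℝ) ^ 2) * (π * (n : ℝ)) ^ (2 * i) =
        (a * (n : ℝ) ^ 2) ^ i * Real.exp (-(a * (n : ℝ) ^ 2)) / τ ^ i := by
      intro n
      have h1 : (a * (n : ℝ) ^ 2) ^ i = τ ^ i * (π * (n : ℝ)) ^ (2 * i) := by
        rw [pow_mul, ← mul_pow]
        congr 1
        rw [ha]; ring
      have h2 : -τ * π ^ 2 * (n : ℝ) ^ 2 = -(a * (n : ℝ) ^ 2) := by rw [ha]; ring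
      rw [h1, h2]
      field_simp
    rw [tsum_congr heq]
    have hbound : ∀ n : ℕ, (a * (n : ℝ) ^ 2) ^ i * Real.exp (-(a * (n : ℝ) ^ 2)) / τ ^ i ≤
        M * Real.exp (-b * (n : ℝ) ^ 2) := by
      intro n
      have := main_pointwise ha0 i hi n
      rw [hM]
      calc (a * (n : ℝ) ^ 2) ^ i * Real.exp (-(a * (n : ℝ) ^ 2)) / τ ^ i
          ≤ Real.exp 1 * F * Real.exp (-(a / (2 * i)) * (n : ℝ) ^ 2) / τ ^ i := by
            exact (div_le_div_iff_of_pos_right hτi).2 this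
        _ = Real.exp 1 * F / τ ^ i * Real.exp (-b * (n : ℝ) ^ 2) := by
            rw [hb]; ring
    have hgsum : Summable (fun n : ℕ => M * Real.exp (-b * (n : ℝ) ^ 2)) :=
      (summable_gauss hb0).mul_left M
    have hfsum : Summable (fun n : ℕ =>
        (a * (n : ℝ) ^ 2) ^ i * Real.exp (-(a * (n : ℝ) ^ 2)) / τ ^ i) :=
      Summable.of_nonneg_of_le (fun n => by positivity) hbound hgsum
    have hsb : Real.sqrt b = Real.sqrt a / (Real.sqrt 2 * Real.sqrt i) := by
      rw [hb, ← Real.sqrt_mul (by norm_num : (0:ℝ) ≤ 2) (i:ℝ)]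
      exact Real.sqrt_div ha0.le _
    have hsb2 : 2 / Real.sqrt b = 2 * Real.sqrt 2 * Real.sqrt i / Real.sqrt a := by
      rw [hsb, div_div_eq_mul_div]
      ring
    have hsi1 : (1:ℝ) ≤ Real.sqrt i := by
      rw [show (1:ℝ) = Real.sqrt 1 by simp]
      exact Real.sqrt_le_sqrt hi1
    have hfac : Real.sqrt i * F ≤ (Nat.factorial i : ℝ) := factorial_lb i hi
    have he1 : Real.exp 1 ≤ 2.72 := by
      have := Real.exp_one_lt_d9
      norm_num at this ⊢
      linarith
    have hs2 : Real.sqrt 2 ≤ 1.5 := by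
      rw [show (1.5:ℝ) = Real.sqrt (1.5^2) by rw [Real.sqrt_sq]; norm_num]
      apply Real.sqrt_le_sqrt
      norm_num
    have hs20 : 0 ≤ Real.sqrt 2 := Real.sqrt_nonneg 2
    calc (∑' n : ℕ, (a * (n : ℝ) ^ 2) ^ i * Real.exp (-(a * (n : ℝ) ^ 2)) / τ ^ i)
        ≤ ∑' n : ℕ, M * Real.exp (-b * (n : ℝ) ^ 2) := Summable.tsum_le_tsum hbound hfsum hgsum
      _ = M * ∑' n : ℕ, Real.exp (-b * (n : ℝ) ^ 2) := tsum_mul_left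
      _ ≤ M * (2 + 2 / Real.sqrt b) := by
          apply mul_le_mul_of_nonneg_left (geo_tail_bound hb0) hM0
      _ = Real.exp 1 * F * (2 + 2 * Real.sqrt 2 * Real.sqrt i / Real.sqrt a) / τ ^ i := by
          rw [hM, hsb2]; ring
      _ ≤ 10 * (1 + 1 / Real.sqrt τ) * (Nat.factorial i : ℝ) / τ ^ i := by
          apply (div_le_div_iff_of_pos_right hτi).2
          have t1 : Real.exp 1 * F * 2 ≤ 10 * (Nat.factorial i : ℝ) := by
            have hFle : F ≤ (Nat.factorial i : ℝ) := by nlinarith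
            nlinarith [Real.exp_pos 1]
          have t2 : Real.exp 1 * F * (2 * Real.sqrt 2 * Real.sqrt i / Real.sqrt a) ≤
              10 / Real.sqrt τ * (Nat.factorial i : ℝ) := by
            have hq : Real.exp 1 * (2 * Real.sqrt 2) / Real.sqrt a ≤ 10 / Real.sqrt τ := by
              apply div_le_div₀ (by norm_num) ?_ hτs hsa
              nlinarith [Real.exp_pos 1]
            calc Real.exp 1 * F * (2 * Real.sqrt 2 * Real.sqrt i / Real.sqrt a)
                = Real.exp 1 * (2 * Real.sqrt 2) / Real.sqrt a * (Real.sqrt i * F) := by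
                  ring
              _ ≤ 10 / Real.sqrt τ * (Nat.factorial i : ℝ) := by
                  apply mul_le_mul hq hfac (by positivity) (by positivity)
          have expand1 : Real.exp 1 * F * (2 + 2 * Real.sqrt 2 * Real.sqrt i / Real.sqrt a) =
              Real.exp 1 * F * 2 +
              Real.exp 1 * F * (2 * Real.sqrt 2 * Real.sqrt i / Real.sqrt a) := by ring
          have expand2 : 10 * (1 + 1 / Real.sqrt τ) * (Nat.factorial i : ℝ) =
              10 * (Nat.factorial i : ℝ) + 10 / Real.sqrt τ * (Nat.factorial i : ℝ) := by ring
          linarith
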